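/- Let φ be a modal formula built from ∧, □, ◇, and the constants true and false (possibly with propositional variables but without any negation), and let t be a propositional variable not occurring in φ. Then φ is satisfiable with respect to the class of all frames if and only if the formula φ[true := t] ∧ ⋀_{i=0}^{md(φ)} □^i t (in which the constant true no longer occurs) is satisfiable with respect to the class of all frames. -/

import Mathlib

namespace PoorMansModal

/-- Modal formulas over propositional variables of type `α`: variables `p`,
negated variables `p̄`, general negation, conjunction, disjunction, box, diamond,
and the constants `true` and `false`. -/
inductive Fml (α : Type) : Type where
  | var : α → Fml α
  | nvar : α → Fml α
  | neg : Fml α → Fml α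
  | and : Fml α → Fml α → Fml α
  | or : Fml α → Fml α → Fml α
  | box : Fml α → Fml α
  | dia : Fml α → Fml α
  | tru : Fml α
  | fls : Fml α

/-- A Kripke model: a nonempty set of worlds, an accessibility relation, and a valuation. -/
structure Kripke (α : Type) where
  World : Type
  nonempty : Nonempty World
  R : World → World → Prop
  V : α → World → Prop

/-- Truth of a formula at a world of a model. -/
def Sat {α : Type} (M : Kripke α) : Fml α → M.World → Prop
  | .var p, w => M.V p w
  | .nvar p, w => ¬ M.V p w
  | .neg φ, w => ¬ Sat M φ w
  | .and φ ψ, w => Sat M φ w ∧ Sat M ψ w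
  | .or φ ψ, w => Sat M φ w ∨ Sat M ψ w
  | .box φ, w => ∀ v, M.R w v → Sat M φ v
  | .dia φ, w => ∃ v, M.R w v ∧ Sat M φ v
  | .tru, _ => True
  | .fls, _ => False

/-- Modal depth: depth of nesting of `□` and `◇`. -/
def mdep {α : Type} : Fml α → ℕ
  | .var _ => 0
  | .nvar _ => 0
  | .neg φ => mdep φ
  | .and φ ψ => max (mdep φ) (mdep ψ)
  | .or φ ψ => max (mdep φ) (mdep ψ)
  | .box φ => mdep φ + 1
  | .dia φ => mdep φ + 1
  | .tru => 0
  | .fls => 0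

/-- Conjunction of a list of formulas; the empty conjunction is the always-true formula. -/
def bigConj {α : Type} : List (Fml α) → Fml α
  | [] => .tru
  | [φ] => φ
  | φ :: rest => .and φ (bigConj rest)

/-- `□^k φ`. -/
def boxI {α : Type} : ℕ → Fml α → Fml α
  | 0, φ => φ
  | k + 1, φ => .box (boxI k φ)

/-- `◇^k φ`. -/
def diaI {α : Type} : ℕ → Fml α → Fml α
  | 0, φ => φ
  | k + 1, φ => .dia (diaI k φ)

/-- `(◇□)^k φ`. -/
def diaBoxI {α : Type} : ℕ → Fml α → Fml α
  | 0, φ => φ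
  | k + 1, φ => .dia (.box (diaBoxI k φ))

/-- The literal with variable `l.1` and sign `l.2` (`true` = positive). -/
def litF {α : Type} (l : α × Bool) : Fml α := if l.2 then .var l.1 else .nvar l.1

/-- The variable `p` occurs in the formula. -/
def occursV {α : Type} (p : α) : Fml α → Prop
  | .var q => p = q
  | .nvar q => p = q
  | .neg φ => occursV p φ
  | .and φ ψ => occursV p φ ∨ occursV p ψ
  | .or φ ψ => occursV p φ ∨ occursV p ψ
  | .box φ => occursV p φ
  | .dia φ => occursV p φ
  | .tru => False
  | .fls => False

/-- Poor man's formulas: built from literals, `∧`, `□`, `◇` only. -/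
def PoorF {α : Type} : Fml α → Prop
  | .var _ => True
  | .nvar _ => True
  | .and φ ψ => PoorF φ ∧ PoorF ψ
  | .box φ => PoorF φ
  | .dia φ => PoorF φ
  | _ => False

/-- Formulas of the language `L`: built from literals, `∧`, `∨`, `□`, `◇`. -/
def InL {α : Type} : Fml α → Prop
  | .var _ => True
  | .nvar _ => True
  | .and φ ψ => InL φ ∧ InL ψ
  | .or φ ψ => InL φ ∧ InL ψ
  | .box φ => InL φ
  | .dia φ => InL φ
  | _ => False

/-- Every world has at most one successor. -/
def AtMostOne {W : Type} (R : W → W → Prop) : Prop :=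
  ∀ w v v', R w v → R w v' → v = v'

/-- Every world has at least one successor. -/
def AtLeastOne {W : Type} (R : W → W → Prop) : Prop :=
  ∀ w, ∃ v, R w v

/-- Every world has at most two successors. -/
def AtMostTwo {W : Type} (R : W → W → Prop) : Prop :=
  ∀ w v₁ v₂ v₃, R w v₁ → R w v₂ → R w v₃ → v₁ = v₂ ∨ v₁ = v₃ ∨ v₂ = v₃

/-- `chainR R n w v`: there is an `R`-path of length exactly `n` from `w` to `v`. -/
def chainR {W : Type} (R : W → W → Prop) : ℕ → W → W → Prop
  | 0, w, v => w = v
  | k + 1, w, v => ∃ u, R w u ∧ chainR R k u v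

/-- `R` is the parent-child relation of a rooted tree with root `root`
in which every node has at most two children. -/
structure IsBinTree {W : Type} (R : W → W → Prop) (root : W) : Prop where
  reach : ∀ w, Relation.ReflTransGen R root w
  root_no_parent : ∀ w, ¬ R w root
  unique_parent : ∀ w v v', R v w → R v' w → v = v'
  acyclic : ∀ w, ¬ Relation.TransGen R w w
  at_most_two_children : ∀ w v₁ v₂ v₃, R w v₁ → R w v₂ → R w v₃ → v₁ = v₂ ∨ v₁ = v₃ ∨ v₂ = v₃

/-- `φ_exp = ⋀_{i=1}^n □^{i-1}(◇□^{n-i} p_i ∧ ◇□^{n-i} p̄_i)`, with `p_i = var i`. -/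
def phiExp (n : ℕ) : Fml ℕ :=
  bigConj ((List.range n).map (fun j =>
    boxI j (.and (.dia (boxI (n - 1 - j) (.var (j + 1))))
                 (.dia (boxI (n - 1 - j) (.nvar (j + 1)))))))

/-- Satisfiability with respect to the class of all frames. -/
def SatAll (φ : Fml ℕ) : Prop := ∃ (M : Kripke ℕ) (w : M.World), Sat M φ w

/-- Satisfiability with respect to `F≤1`. -/
def SatLe1 (φ : Fml ℕ) : Prop := ∃ M : Kripke ℕ, AtMostOne M.R ∧ ∃ w, Sat M φ w

/-- Satisfiability with respect to `F≥1`. -/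
def SatGe1 (φ : Fml ℕ) : Prop := ∃ M : Kripke ℕ, AtLeastOne M.R ∧ ∃ w, Sat M φ w

/-- Satisfiability with respect to `F≤2`. -/
def SatLe2 (φ : Fml ℕ) : Prop := ∃ M : Kripke ℕ, AtMostTwo M.R ∧ ∃ w, Sat M φ w

/-- A one-world model with no successors, realizing the boolean assignment `v`;
truth at its world is propositional truth for formulas without modal operators. -/
def propModel (v : ℕ → Bool) : Kripke ℕ :=
  { World := Unit, nonempty := ⟨()⟩, R := fun _ _ => False, V := fun p _ => v p = true }

/-- Propositional satisfaction of `φ` under the assignment `v`. -/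
def PropSat (v : ℕ → Bool) (φ : Fml ℕ) : Prop := Sat (propModel v) φ ()


/-- Formulas built from variables, `∧`, `□`, `◇`, and the constants `true` and `false`
(no negation of any kind). -/
def Frag17 : Fml ℕ → Prop
  | .var _ => True
  | .and φ ψ => Frag17 φ ∧ Frag17 ψ
  | .box φ => Frag17 φ
  | .dia φ => Frag17 φ
  | .tru => True
  | .fls => True
  | _ => False

/-- `φ[true := t]`: replace every occurrence of the constant `true` by the variable `t`. -/
def substT (t : ℕ) : Fml ℕ → Fml ℕ
  | .tru => .var t
  | .neg φ => .neg (substT t φ)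
  | .and φ ψ => .and (substT t φ) (substT t ψ)
  | .or φ ψ => .or (substT t φ) (substT t ψ)
  | .box φ => .box (substT t φ)
  | .dia φ => .dia (substT t φ)
  | a => a

lemma sat_bigConj {α} (M : Kripke α) (l : List (Fml α)) (w : M.World) :
    Sat M (bigConj l) w ↔ ∀ ψ ∈ l, Sat M ψ w := by
  induction l with
  | nil => simp [bigConj, Sat]
  | cons φ rest ih =>
    cases rest with
    | nil => simp [bigConj]
    | cons ψ rest' =>
      simp only [bigConj, Sat] at *
      rw [ih]
      constructor
      · rintro ⟨h1, h2⟩ χ hχ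
        rcases List.mem_cons.1 hχ with h | h
        · exact h ▸ h1
        · exact h2 χ h
      · intro h
        exact ⟨h φ List.mem_cons_self, fun χ hχ => h χ (List.mem_cons_of_mem _ hχ)⟩

lemma sat_boxI_of_all {α} (M : Kripke α) (ψ : Fml α) (h : ∀ v, Sat M ψ v)
    (i : ℕ) (w : M.World) : Sat M (boxI i ψ) w := by
  induction i generalizing w with
  | zero => exact h w
  | succ k ih => exact fun v _ => ih v

lemma sat_of_substT {M : Kripke ℕ} {t : ℕ} (φ : Fml ℕ) (hφ : Frag17 φ)
    (w : M.World) (h : Sat M (substT t φ) w) : Sat M φ w := by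
  induction φ generalizing w with
  | var p => exact h
  | and φ ψ ihφ ihψ => exact ⟨ihφ hφ.1 w h.1, ihψ hφ.2 w h.2⟩
  | box φ ih => exact fun v hv => ih hφ v (h v hv)
  | dia φ ih => obtain ⟨v, hv, hs⟩ := h; exact ⟨v, hv, ih hφ v hs⟩
  | tru => trivial
  | fls => exact h
  | nvar p => exact hφ.elim
  | neg _ _ => exact hφ.elim
  | or _ _ _ _ => exact hφ.elim

lemma substT_of_sat {M : Kripke ℕ} {t : ℕ} (htot : ∀ v, M.V t v) (φ : Fml ℕ)
    (hφ : Frag17 φ) (w : M.World) (h : Sat M φ w) : Sat M (substT t φ) w := by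
  induction φ generalizing w with
  | var p => exact h
  | and φ ψ ihφ ihψ => exact ⟨ihφ hφ.1 w h.1, ihψ hφ.2 w h.2⟩
  | box φ ih => exact fun v hv => ih hφ v (h v hv)
  | dia φ ih => obtain ⟨v, hv, hs⟩ := h; exact ⟨v, hv, ih hφ v hs⟩
  | tru => exact htot w
  | fls => exact h
  | nvar p => exact hφ.elim
  | neg _ _ => exact hφ.elim
  | or _ _ _ _ => exact hφ.elim

/-- Adding `t` everywhere doesn't change truth of formulas in which `t` doesn't occur. -/
lemma sat_addT {M : Kripke ℕ} {t : ℕ} (φ : Fml ℕ) (ht : ¬ occursV t φ) (w : M.World) :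
    Sat M φ w ↔
    Sat { World := M.World, nonempty := M.nonempty, R := M.R,
          V := fun p v => p = t ∨ M.V p v } φ w := by
  induction φ generalizing w with
  | var p =>
    simp only [Sat]
    constructor
    · exact fun h => Or.inr h
    · rintro (h | h)
      · exact absurd h.symm ht
      · exact h
  | nvar p =>
    simp only [Sat]
    constructor
    · rintro h (h' | h')
      · exact ht h'.symm
      · exact h h'
    · exact fun h h' => h (Or.inr h')
  | neg φ ih => exact not_congr (ih ht w)
  | and φ ψ ihφ ihψ =>
    exact and_congr (ihφ (fun h => ht (Or.inl h)) w) (ihψ (fun h => ht (Or.inr h)) w)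
  | or φ ψ ihφ ihψ =>
    exact or_congr (ihφ (fun h => ht (Or.inl h)) w) (ihψ (fun h => ht (Or.inr h)) w)
  | box φ ih => exact forall_congr' fun v => imp_congr Iff.rfl (ih ht v)
  | dia φ ih => exact exists_congr fun v => and_congr Iff.rfl (ih ht v)
  | tru => exact Iff.rfl
  | fls => exact Iff.rfl

/-- For a formula `φ` built from variables, `∧`, `□`, `◇`, `true`, and
`false` (without any negation) and a variable `t` not occurring in `φ`, `φ` is
satisfiable with respect to the class of all frames iff
`φ[true := t] ∧ ⋀_{i=0}^{md(φ)} □^i t` is satisfiable with respect to the class of all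
frames. -/
theorem stmt17 (φ : Fml ℕ) (hφ : Frag17 φ) (t : ℕ) (ht : ¬ occursV t φ) :
    SatAll φ ↔
      SatAll (.and (substT t φ)
        (bigConj ((List.range (mdep φ + 1)).map (fun i => boxI i (.var t))))) := by
  constructor
  · rintro ⟨M, w, hw⟩
    let M' : Kripke ℕ :=
      { World := M.World, nonempty := M.nonempty, R := M.R,
        V := fun p v => p = t ∨ M.V p v }
    refine ⟨M', w, ?_, ?_⟩
    · exact substT_of_sat (M := M') (fun v => Or.inl rfl) φ hφ w
        ((sat_addT (M := M) φ ht w).mp hw)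
    · rw [sat_bigConj]
      intro ψ hψ
      simp only [List.mem_map] at hψ
      obtain ⟨i, _, rfl⟩ := hψ
      exact sat_boxI_of_all M' (.var t) (fun v => Or.inl rfl) i w
  · rintro ⟨M, w, hw1, _⟩
    exact ⟨M, w, sat_of_substT φ hφ w hw1⟩

end PoorMansModal
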